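/- arXiv:2006.03076 — 2 statements merged into one kernel-verified Lean document; each statement's English description precedes it below -/
import Mathlib

section
/- Let α²(λ), ρ²(λ) solve the Yamabe flow system dα²/dλ = A + B·α²/ρ², dρ²/dλ = B + A·ρ²/α² with A = 2d(d-1)/(d+p), B = -2p(p-1)/(d+p), and initial condition α²(0) = C₀ρ₀². Then α²(λ) = C₀ρ₀² + (A + B·C₀)λ and ρ²(λ) = ρ₀² + (B + A/C₀)λ. -/
/-- A function with constant derivative `c` everywhere is affine: `g l = g 0 + c * l`. -/
lemma linear_of_const_deriv (g : ℝ → ℝ) (c : ℝ) (h : ∀ l : ℝ, HasDerivAt g c l) :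
    ∀ l : ℝ, g l = g 0 + c * l := by
  intro l
  have hk : ∀ x : ℝ, HasDerivAt (fun y => g y - c * y) 0 x := by
    intro x
    have := (h x).sub ((hasDerivAt_id x).const_mul c)
    simp only [id, mul_one, sub_self] at this
    exact this
  have hconst : (fun y => g y - c * y) l = (fun y => g y - c * y) 0 :=
    is_const_of_deriv_eq_zero (fun x => (hk x).differentiableAt)
      (fun x => (hk x).deriv) l 0
  simp only at hconst
  linarith

/-- Yamabe flow of `AdS_d(α) × S^p(ρ)` with `A = 2d(d-1)/(d+p)`, `B = -2p(p-1)/(d+p)`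
and initial condition `α²(0) = C₀ ρ₀²`: the squared radii evolve linearly,
`α²(λ) = C₀ρ₀² + (A + B C₀)λ` and `ρ²(λ) = ρ₀² + (B + A/C₀)λ`. -/
theorem yamabe_flow_solution (d p C₀ ρ0sq : ℝ) (αsq ρsq : ℝ → ℝ)
    (A B : ℝ) (hA : A = 2 * d * (d - 1) / (d + p)) (hB : B = -(2 * p * (p - 1)) / (d + p))
    (hαpos : ∀ l : ℝ, 0 < αsq l) (hρpos : ∀ l : ℝ, 0 < ρsq l)
    (hC₀ : 0 < C₀) (hρ0 : ρsq 0 = ρ0sq) (hα0 : αsq 0 = C₀ * ρ0sq)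
    (hαdiff : ∀ l : ℝ, HasDerivAt αsq (A + B * (αsq l / ρsq l)) l)
    (hρdiff : ∀ l : ℝ, HasDerivAt ρsq (B + A * (ρsq l / αsq l)) l) :
    ∀ l : ℝ, αsq l = C₀ * ρ0sq + (A + B * C₀) * l ∧ ρsq l = ρ0sq + (B + A / C₀) * l := by
  -- the ratio αsq/ρsq has zero derivative
  have hratio : ∀ l : ℝ, HasDerivAt (fun x => αsq x / ρsq x) 0 l := by
    intro l
    have hρne : ρsq l ≠ 0 := (hρpos l).ne'
    have hαne : αsq l ≠ 0 := (hαpos l).ne'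
    have h := (hαdiff l).div (hρdiff l) hρne
    have hval : ((A + B * (αsq l / ρsq l)) * ρsq l -
        αsq l * (B + A * (ρsq l / αsq l))) / ρsq l ^ 2 = 0 := by
      field_simp
      ring
    rwa [hval] at h
  -- hence the ratio is constant, equal to C₀
  have hconst : ∀ l : ℝ, αsq l / ρsq l = C₀ := by
    intro l
    have h0 : αsq 0 / ρsq 0 = C₀ := by
      rw [hα0, hρ0]
      have : ρ0sq ≠ 0 := by rw [← hρ0]; exact (hρpos 0).ne'
      field_simp
    have := is_const_of_deriv_eq_zero (f := fun x => αsq x / ρsq x)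
      (fun x => (hratio x).differentiableAt) (fun x => (hratio x).deriv) l 0
    rw [this, h0]
  have hratio' : ∀ l : ℝ, ρsq l / αsq l = 1 / C₀ := by
    intro l
    have h := hconst l
    have hρne : ρsq l ≠ 0 := (hρpos l).ne'
    have hαne : αsq l ≠ 0 := (hαpos l).ne'
    field_simp at h ⊢
    linarith [h]
  -- now both functions are affine
  have hαlin : ∀ l : ℝ, αsq l = αsq 0 + (A + B * C₀) * l := by
    apply linear_of_const_deriv
    intro l
    have := hαdiff l
    rwa [hconst l] at this
  have hρlin : ∀ l : ℝ, ρsq l = ρsq 0 + (B + A / C₀) * l := by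
    apply linear_of_const_deriv
    intro l
    have := hρdiff l
    rw [hratio' l] at this
    have heq : B + A * (1 / C₀) = B + A / C₀ := by ring
    rwa [heq] at this
  intro l
  constructor
  · rw [hαlin l, hα0]
  · rw [hρlin l, hρ0]
end

section
/- For a Schwarzschild-AdS₄ black hole with β(r₊) = 4πα²r₊/(α² + 3r₊²) and action difference ΔI(r₊) = πr₊²(α² - r₊²)/(α² + 3r₊²), treating ΔI as a function of β through r₊ on the large black hole branch, one has d(ΔI)/dβ = M and β·M - ΔI = πr₊², where M = (r₊/2)(1 + r₊²/α²). That is, the mean energy is the black hole mass and the entropy equals one quarter of the horizon area 4πr₊². -/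
open Real

/-- Euclidean thermodynamics of Schwarzschild-AdS₄: with inverse temperature
`β(r₊) = 4πα²r₊/(α² + 3r₊²)`, action difference
`ΔI(r₊) = πr₊²(α² - r₊²)/(α² + 3r₊²)` and mass `M = (r₊/2)(1 + r₊²/α²)`, on the
large black hole branch one has `d(ΔI)/dβ = (dΔI/dr₊)/(dβ/dr₊) = M` and
`β M - ΔI = πr₊²` (i.e. `⟨E⟩ = M` and `S = A/4` with `A = 4πr₊²`). -/
theorem sads_thermodynamics (α r : ℝ) (hα : 0 < α) (hr : α / Real.sqrt 3 < r) :
    (deriv (fun s : ℝ => π * s ^ 2 * (α ^ 2 - s ^ 2) / (α ^ 2 + 3 * s ^ 2)) r) /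
      (deriv (fun s : ℝ => 4 * π * α ^ 2 * s / (α ^ 2 + 3 * s ^ 2)) r) =
      r / 2 * (1 + r ^ 2 / α ^ 2) ∧
    4 * π * α ^ 2 * r / (α ^ 2 + 3 * r ^ 2) * (r / 2 * (1 + r ^ 2 / α ^ 2)) -
      π * r ^ 2 * (α ^ 2 - r ^ 2) / (α ^ 2 + 3 * r ^ 2) = π * r ^ 2 := by
  have hα2 : (α : ℝ) ^ 2 ≠ 0 := by positivity
  have hD : (α : ℝ) ^ 2 + 3 * r ^ 2 ≠ 0 := by positivity
  have hs3 : (0 : ℝ) < Real.sqrt 3 := by positivity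
  have hra : α < r * Real.sqrt 3 := by
    have := (div_lt_iff₀ hs3).mp hr
    linarith
  have hlt : α ^ 2 < 3 * r ^ 2 := by
    have hαr : 0 < r := lt_trans (by positivity) hr
    have h2 : α ^ 2 < (r * Real.sqrt 3) ^ 2 := by
      apply sq_lt_sq' _ hra
      nlinarith
    have h3 : (r * Real.sqrt 3) ^ 2 = 3 * r ^ 2 := by
      rw [mul_pow, Real.sq_sqrt (by norm_num : (3:ℝ) ≥ 0)]; ring
    linarith [h3 ▸ h2]
  have hne : α ^ 2 - 3 * r ^ 2 ≠ 0 := by linarith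
  have h1 : HasDerivAt (fun s : ℝ => π * s ^ 2 * (α ^ 2 - s ^ 2) / (α ^ 2 + 3 * s ^ 2))
      (2 * r * (α ^ 2 - 3 * r ^ 2) * (α ^ 2 + r ^ 2) * π / (α ^ 2 + 3 * r ^ 2) ^ 2) r := by
    have := (((hasDerivAt_pow 2 r).const_mul π).mul
        ((hasDerivAt_const r (α ^ 2)).sub (hasDerivAt_pow 2 r))).div
        ((hasDerivAt_const r (α ^ 2)).add ((hasDerivAt_pow 2 r).const_mul 3)) hD
    refine this.congr_deriv ?_
    simp only [Pi.add_apply, Pi.sub_apply, Pi.mul_apply]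
    field_simp
    ring
  have h2 : HasDerivAt (fun s : ℝ => 4 * π * α ^ 2 * s / (α ^ 2 + 3 * s ^ 2))
      (4 * π * α ^ 2 * (α ^ 2 - 3 * r ^ 2) / (α ^ 2 + 3 * r ^ 2) ^ 2) r := by
    have := ((hasDerivAt_id r).const_mul (4 * π * α ^ 2)).div
        ((hasDerivAt_const r (α ^ 2)).add ((hasDerivAt_pow 2 r).const_mul 3)) hD
    refine this.congr_deriv ?_
    simp only [Pi.add_apply, Pi.sub_apply, Pi.mul_apply, id]
    field_simp
    ring
  constructor
  · rw [h1.deriv, h2.deriv]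
    have hπ : (π : ℝ) ≠ 0 := Real.pi_ne_zero
    rw [div_eq_iff (div_ne_zero (mul_ne_zero (by positivity) hne) (pow_ne_zero 2 hD))]
    field_simp
    ring
  · field_simp
    ring
end
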